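/- Let V be an n-dimensional ℂ-vector space, {F_j}_{j∈J} a finite family of subspaces of V, and F = Σ_j F_j their sum. Assume dim F = i ≤ k and ℰ ∈ Λ^i F is nonzero. Then the intersection over j of the annihilator spaces {x ∈ Λ^k V : x ∧ y = 0 for all y ∈ F_j} equals {x ∈ Λ^k V : x ∧ y = 0 for all y ∈ F}, and this space equals ℰ ∧ Λ^{k−i} V. -/

import Mathlib

open ExteriorAlgebra

section AuxLemmas

variable {V : Type*} [AddCommGroup V] [Module ℂ V]

lemma aux_ι_comm {m : ℕ} {z : ExteriorAlgebra ℂ V} (hz : z ∈ ⋀[ℂ]^m V) (v : V) :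
    ι ℂ v * z = ((-1 : ℂ)^m) • (z * ι ℂ v) := by
  induction hz using Submodule.pow_induction_on_left' with
  | algebraMap r => rw [pow_zero, one_smul, Algebra.commutes]
  | add x y i hx hy ihx ihy => rw [mul_add, add_mul, ihx, ihy, smul_add]
  | mem_mul a ha i x hx ih =>
    obtain ⟨w, rfl⟩ := ha
    have h1 : ι ℂ v * ι ℂ w = -(ι ℂ w * ι ℂ v) :=
      eq_neg_of_add_eq_zero_left (ι_add_mul_swap v w)
    calc ι ℂ v * (ι ℂ w * x) = -(ι ℂ w * (ι ℂ v * x)) := by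
          rw [← mul_assoc, h1, neg_mul, mul_assoc]
      _ = ((-1 : ℂ)^(i+1)) • (ι ℂ w * x * ι ℂ v) := by
          rw [ih, mul_smul_comm, ← neg_smul, mul_assoc]
          congr 1
          rw [pow_succ]
          ring

lemma aux_comm {l m : ℕ} {w z : ExteriorAlgebra ℂ V} (hw : w ∈ ⋀[ℂ]^l V)
    (hz : z ∈ ⋀[ℂ]^m V) : z * w = ((-1 : ℂ)^(m*l)) • (w * z) := by
  induction hw using Submodule.pow_induction_on_left' with
  | algebraMap r => rw [Nat.mul_zero, pow_zero, one_smul, Algebra.commutes]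
  | add x y i hx hy ihx ihy => rw [mul_add, add_mul, ihx, ihy, smul_add]
  | mem_mul a ha i x hx ih =>
    obtain ⟨u, rfl⟩ := ha
    have h1 : z * ι ℂ u = ((-1 : ℂ)^m) • (ι ℂ u * z) := by
      rw [aux_ι_comm hz u, smul_smul, ← pow_add, Even.neg_one_pow (Even.add_self m), one_smul]
    calc z * (ι ℂ u * x) = ((-1 : ℂ)^m) • (ι ℂ u * (z * x)) := by
          rw [← mul_assoc, h1, smul_mul_assoc, mul_assoc]
      _ = ((-1 : ℂ)^(m*(i+1))) • (ι ℂ u * x * z) := by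
          rw [ih, mul_smul_comm, smul_smul, ← pow_add, mul_assoc,
            show m + m*i = m*(i+1) by ring]

lemma aux_mul_mem {a b : ℕ} {x y : ExteriorAlgebra ℂ V} (hx : x ∈ ⋀[ℂ]^a V)
    (hy : y ∈ ⋀[ℂ]^b V) : x * y ∈ ⋀[ℂ]^(a+b) V := by
  rw [exteriorPower, pow_add]
  exact Submodule.mul_mem_mul hx hy

lemma aux_contract_zero {z : ExteriorAlgebra ℂ V} (hz : z ∈ ⋀[ℂ]^0 V)
    (d : Module.Dual ℂ V) : CliffordAlgebra.contractRight z d = 0 := by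
  rw [exteriorPower, pow_zero] at hz
  obtain ⟨r, rfl⟩ := Submodule.mem_one (R := ℂ) (A := ExteriorAlgebra ℂ V) |>.mp hz
  exact CliffordAlgebra.contractRight_algebraMap 0 d r

lemma aux_contract_mem {m : ℕ} {z : ExteriorAlgebra ℂ V} (hz : z ∈ ⋀[ℂ]^m V)
    (d : Module.Dual ℂ V) : CliffordAlgebra.contractRight z d ∈ ⋀[ℂ]^(m-1) V := by
  induction hz using Submodule.pow_induction_on_right' with
  | algebraMap r => rw [CliffordAlgebra.contractRight_algebraMap 0 d r]; exact Submodule.zero_mem _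
  | add x y i hx hy ihx ihy =>
    rw [map_add, LinearMap.add_apply]
    exact Submodule.add_mem _ ihx ihy
  | mul_mem i x hx ih a ha =>
    obtain ⟨u, rfl⟩ := ha
    rw [CliffordAlgebra.contractRight_mul_ι]
    refine Submodule.sub_mem _ (Submodule.smul_mem _ _ ?_) ?_
    · simpa using hx
    · match i with
      | 0 => rw [aux_contract_zero hx, zero_mul]; exact Submodule.zero_mem _
      | Nat.succ j =>
        have h1 : ι ℂ u ∈ ⋀[ℂ]^1 V := by
          rw [exteriorPower, pow_one]; exact LinearMap.mem_range_self _ _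
        simpa using aux_mul_mem (ih) h1

lemma aux_ann {x : ExteriorAlgebra ℂ V} {v : V} {d : Module.Dual ℂ V}
    (h : x * ι ℂ v = 0) (hd : d v = 0) :
    (CliffordAlgebra.contractRight x d) * ι ℂ v = 0 := by
  have h2 := CliffordAlgebra.contractRight_mul_ι (d := d) v x
  rw [h, map_zero, LinearMap.zero_apply, hd, zero_smul, zero_sub] at h2
  exact neg_eq_zero.mp h2.symm

lemma aux_peel {x : ExteriorAlgebra ℂ V} {v : V} {d : Module.Dual ℂ V}
    (h : x * ι ℂ v = 0) (hd : d v = 1) :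
    x = (CliffordAlgebra.contractRight x d) * ι ℂ v := by
  have h2 := CliffordAlgebra.contractRight_mul_ι (d := d) v x
  rw [h, map_zero, LinearMap.zero_apply, hd, one_smul] at h2
  exact (sub_eq_zero.mp h2.symm)

lemma aux_snoc {m : ℕ} (g : Fin m → V) (y : V) :
    ιMulti ℂ (m+1) (Fin.snoc g y) = ιMulti ℂ m g * ι ℂ y := by
  rw [ιMulti_apply, ιMulti_apply, List.ofFn_succ']
  simp

lemma aux_det_smul {M N : Type*} [AddCommGroup M] [Module ℂ M] [AddCommGroup N] [Module ℂ N]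
    {i : ℕ} (e : Module.Basis (Fin i) ℂ M) (A : M [⋀^Fin i]→ₗ[ℂ] N) (g : Fin i → M) :
    A g = e.det g • A e := by
  have h : A = (LinearMap.toSpanSingleton ℂ N (A e)).compAlternatingMap e.det := by
    refine Module.Basis.ext_alternating e fun j hj => ?_
    let σ : Equiv.Perm (Fin i) := Equiv.ofBijective j ((Finite.injective_iff_bijective).1 hj)
    change A (e ∘ σ) = _
    rw [AlternatingMap.map_perm]
    simp only [LinearMap.compAlternatingMap_apply, LinearMap.toSpanSingleton_apply]
    rw [show ((fun i_1 => e (j i_1)) : Fin i → M) = ⇑e ∘ σ from rfl, AlternatingMap.map_perm,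
      Module.Basis.det_self]
    simp [Units.smul_def, Int.cast_smul_eq_zsmul]
  conv_lhs => rw [h]
  simp

end AuxLemmas

/-- Let `V` be an `n`-dimensional complex vector space, `{F_j}` a finite family
of subspaces with sum `F`, `dim F = i ≤ k`, and let `ℰ` be a nonzero element of
`Λ^i F` (the span, inside `Λ^i V`, of the `i`-fold wedges of elements of `F`).
Then `∩_j {x ∈ Λ^k V : x ∧ y = 0 ∀ y ∈ F_j} = {x ∈ Λ^k V : x ∧ y = 0 ∀ y ∈ F}`,
and this space equals `ℰ ∧ Λ^{k-i} V`. -/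
theorem stmt6 (n i k : ℕ) (hik : i ≤ k) (hkn : k ≤ n)
    (V : Type*) [AddCommGroup V] [Module ℂ V] [FiniteDimensional ℂ V]
    (hV : Module.finrank ℂ V = n)
    (J : Type*) [Fintype J] [Nonempty J] (Fj : J → Submodule ℂ V)
    (F : Submodule ℂ V) (hF : F = ⨆ j, Fj j)
    (hdim : Module.finrank ℂ F = i)
    (E : ExteriorAlgebra ℂ V) (hE : E ≠ 0)
    (hEmem : E ∈ Submodule.span ℂ {z : ExteriorAlgebra ℂ V |
      ∃ g : Fin i → V, (∀ t, g t ∈ F) ∧ z = (List.ofFn fun t => ι ℂ (g t)).prod}) :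
    (⋂ j : J, {x : ExteriorAlgebra ℂ V | x ∈ ⋀[ℂ]^k V ∧ ∀ y ∈ Fj j, x * ι ℂ y = 0})
        = {x : ExteriorAlgebra ℂ V | x ∈ ⋀[ℂ]^k V ∧ ∀ y ∈ F, x * ι ℂ y = 0}
      ∧ {x : ExteriorAlgebra ℂ V | x ∈ ⋀[ℂ]^k V ∧ ∀ y ∈ F, x * ι ℂ y = 0}
        = {x : ExteriorAlgebra ℂ V |
            x ∈ Submodule.map (LinearMap.mulLeft ℂ E) (⋀[ℂ]^(k - i) V)} := by
  classical
  constructor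
  · -- part 1
    ext x
    simp only [Set.mem_iInter, Set.mem_setOf_eq]
    constructor
    · intro h
      refine ⟨(h (Classical.arbitrary J)).1, ?_⟩
      have hle : F ≤ LinearMap.ker ((LinearMap.mulLeft ℂ x) ∘ₗ ι ℂ) := by
        rw [hF]
        refine iSup_le fun j y hy => ?_
        simp only [LinearMap.mem_ker, LinearMap.comp_apply, LinearMap.mulLeft_apply]
        exact (h j).2 y hy
      intro y hy
      simpa using hle hy
    · intro h j
      exact ⟨h.1, fun y hy => h.2 y (hF ▸ le_iSup Fj j hy)⟩
  · -- part 2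
    obtain ⟨G, hG⟩ := Submodule.exists_isCompl F
    set π := F.projectionOnto G hG with hπ
    set bF : Module.Basis (Fin i) ℂ F := Module.finBasisOfFinrankEq ℂ F hdim with hbF
    set f : Fin i → V := fun t => (bF t : V) with hf
    have hfF : ∀ t, f t ∈ F := fun t => (bF t).2
    set d : Fin i → Module.Dual ℂ V := fun t => (bF.coord t).comp π with hd
    have hdf : ∀ s t, d s (f t) = if t = s then 1 else 0 := by
      intro s t
      have hπf : π (f t) = bF t := Submodule.projectionOnto_apply_left hG (bF t)
      simp only [hd, LinearMap.comp_apply, hπf, Module.Basis.coord_apply, Module.Basis.repr_self,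
        Finsupp.single_apply]
    set W : ExteriorAlgebra ℂ V := ιMulti ℂ i f with hW
    have hWmem : W ∈ ⋀[ℂ]^i V := ιMulti_range ℂ i (Set.mem_range_self f)
    have hWy : ∀ y ∈ F, W * ι ℂ y = 0 := by
      intro y hy
      rw [hW, ← aux_snoc f y]
      set g : Fin (i+1) → V := Fin.snoc f y with hg
      have hgF : ∀ t, g t ∈ F := by
        intro t
        refine Fin.lastCases ?_ ?_ t
        · simpa [hg] using hy
        · intro s; simpa [hg] using hfF s
      refine AlternatingMap.map_linearDependent _ _ fun hli => ?_
      have hcomp : F.subtype ∘ (fun t => (⟨g t, hgF t⟩ : F)) = g := rfl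
      have hli2 : LinearIndependent ℂ (fun t => (⟨g t, hgF t⟩ : F)) :=
        LinearIndependent.of_comp F.subtype (by rwa [hcomp])
      have hcard := hli2.fintype_card_le_finrank
      rw [hdim, Fintype.card_fin] at hcard
      omega
    -- E = c • W
    have hspan : E ∈ Submodule.span ℂ ({W} : Set (ExteriorAlgebra ℂ V)) := by
      refine Submodule.span_le.mpr ?_ hEmem
      rintro z ⟨g, hgF, rfl⟩
      have h1 : (List.ofFn fun t => ι ℂ (g t)).prod
          = ((ιMulti ℂ i).compLinearMap F.subtype) (fun t => (⟨g t, hgF t⟩ : F)) := by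
        rw [AlternatingMap.compLinearMap_apply, ιMulti_apply]
        rfl
      have h2 : ((ιMulti ℂ i).compLinearMap F.subtype) bF = W := by
        rw [AlternatingMap.compLinearMap_apply]
        rfl
      rw [h1, aux_det_smul bF _ _, h2]
      exact Submodule.mem_span_singleton.mpr ⟨_, rfl⟩
    obtain ⟨c, hc⟩ := Submodule.mem_span_singleton.mp hspan
    have hc0 : c ≠ 0 := fun h0 => hE (by rw [← hc, h0, zero_smul])
    ext x
    simp only [Set.mem_setOf_eq, Submodule.mem_map]
    constructor
    · rintro ⟨hxk, hxann⟩
      set f' : ℕ → V := fun t => if h : t < i then f ⟨t, h⟩ else 0 with hf'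
      have hf'F : ∀ t, t < i → f' t ∈ F := by
        intro t ht
        simp only [hf', dif_pos ht]
        exact hfF _
      have claim : ∀ m, m ≤ i → ∃ b, b ∈ ⋀[ℂ]^(k-m) V ∧
          (∀ t, t < i - m → b * ι ℂ (f' t) = 0) ∧
          x = b * (List.ofFn fun s : Fin m => ι ℂ (f' (i - m + s))).prod := by
        intro m
        induction m with
        | zero =>
          intro _
          refine ⟨x, by simpa using hxk, fun t ht => hxann _ (hf'F t (by omega)), by simp⟩
        | succ m ih =>
          intro hm
          obtain ⟨b, hbk, hbann, hbx⟩ := ih (by omega)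
          have hv : f' (i - m - 1) = f ⟨i - m - 1, by omega⟩ := by
            simp only [hf', dif_pos (show i - m - 1 < i by omega)]
          set dd := d ⟨i - m - 1, by omega⟩ with hdd
          have hdv : dd (f' (i - m - 1)) = 1 := by
            rw [hv, hdd, hdf]
            simp
          have hb0 : b * ι ℂ (f' (i - m - 1)) = 0 := hbann _ (by omega)
          refine ⟨CliffordAlgebra.contractRight b dd, ?_, ?_, ?_⟩
          · have h3 := aux_contract_mem hbk dd
            rwa [Nat.sub_sub] at h3
          · intro t ht
            refine aux_ann (hbann t (by omega)) ?_
            have ht' : f' t = f ⟨t, by omega⟩ := by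
              simp only [hf', dif_pos (show t < i by omega)]
            rw [ht', hdd, hdf]
            have : ¬ ((⟨t, by omega⟩ : Fin i) = ⟨i - m - 1, by omega⟩) := by
              simp only [Fin.mk.injEq]
              omega
            simp [this]
          · have hpeel : b = CliffordAlgebra.contractRight b dd * ι ℂ (f' (i - m - 1)) :=
              aux_peel hb0 hdv
            rw [hbx]
            conv_lhs => rw [hpeel]
            rw [mul_assoc]
            congr 1
            rw [List.ofFn_succ, List.prod_cons]
            congr 1
            · refine congrArg _ (congrArg _ (funext fun s => ?_))
              congr 1
              simp only [Fin.val_succ]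
              congr 1
              omega
      obtain ⟨b, hbk, _, hbx⟩ := claim i le_rfl
      have hprod : (List.ofFn fun s : Fin i => ι ℂ (f' (i - i + ↑s))).prod = W := by
        rw [hW, ιMulti_apply]
        refine congrArg _ (congrArg _ (funext fun s => ?_))
        congr 1
        have h4 : i - i + (s : ℕ) = (s : ℕ) := by omega
        rw [h4]
        simp only [hf', dif_pos s.isLt, Fin.eta]
      rw [hprod] at hbx
      refine ⟨(c⁻¹ * ((-1:ℂ)^((k-i)*i))) • b, Submodule.smul_mem _ _ hbk, ?_⟩
      rw [LinearMap.mulLeft_apply, ← hc, smul_mul_assoc, mul_smul_comm, smul_smul, hbx,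
        aux_comm hWmem hbk]
      congr 1
      rw [← mul_assoc, mul_inv_cancel₀ hc0, one_mul]
    · rintro ⟨z, hz, rfl⟩
      constructor
      · rw [LinearMap.mulLeft_apply, ← hc, smul_mul_assoc]
        refine Submodule.smul_mem _ _ ?_
        have h5 := aux_mul_mem hWmem hz
        rwa [Nat.add_sub_cancel' hik] at h5
      · intro y hy
        have h1 : z * ι ℂ y = ((-1:ℂ)^(k-i)) • (ι ℂ y * z) := by
          rw [aux_ι_comm hz y, smul_smul, ← pow_add, Even.neg_one_pow (Even.add_self _), one_smul]
        rw [LinearMap.mulLeft_apply, mul_assoc, h1, mul_smul_comm, ← mul_assoc, ← hc,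
          smul_mul_assoc, smul_mul_assoc, hWy y hy]
        simp
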